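/- Let M be a finitely generated projective B-module with compatible G-action. Suppose that for every field k, every ring homomorphism φ : B → k, and every g ∈ G stabilizing φ, the element g acts trivially on the fiber M ⊗_{B,φ} k. Then the counit map B ⊗_A M^G → M, b ⊗ m ↦ b • m, is bijective and M^G is a finitely generated projective A-module. -/

import Mathlib

set_option maxHeartbeats 1000000
set_option synthInstance.maxHeartbeats 400000


open TensorProduct

/-- The subring of `G`-invariant elements of `B`. -/
def fixedSubring (G B : Type*) [Group G] [CommRing B] [MulSemiringAction G B] : Subring B where
  carrier := {b | ∀ g : G, g • b = b}
  mul_mem' := by intro a b ha hb g; rw [smul_mul', ha, hb]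
  one_mem' := fun g => smul_one g
  add_mem' := by intro a b ha hb g; rw [smul_add, ha, hb]
  zero_mem' := fun g => smul_zero g
  neg_mem' := by intro a ha g; rw [smul_neg, ha]

/-- A `B`-module `M` with a compatible `G`-action: `G` acts on `M` by additive
automorphisms and `g • (b • m) = (g • b) • (g • m)`. -/
class CompatibleAction (G B M : Type*) [Group G] [CommRing B] [MulSemiringAction G B]
    [AddCommGroup M] [Module B M] extends DistribMulAction G M where
  smul_smul_comm : ∀ (g : G) (b : B) (m : M), g • (b • m) = (g • b) • (g • m)

/-- The invariants `M^G`, as a module over the invariant subring `A = B^G`. -/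
def invariantSubmodule (G B M : Type*) [Group G] [CommRing B] [MulSemiringAction G B]
    [AddCommGroup M] [Module B M] [CompatibleAction G B M] :
    Submodule (fixedSubring G B) M where
  carrier := {m | ∀ g : G, g • m = m}
  add_mem' := by intro m m' hm hm' g; rw [smul_add, hm g, hm' g]
  zero_mem' := fun g => smul_zero g
  smul_mem' := by
    intro a m hm g
    rw [Subring.smul_def, CompatibleAction.smul_smul_comm g (a : B) m, hm g, a.2 g]

/-- The counit map `ε : B ⊗_A M^G → M`, `b ⊗ m ↦ b • m`. -/
noncomputable def counitMap (G B M : Type*) [Group G] [CommRing B] [MulSemiringAction G B]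
    [AddCommGroup M] [Module B M] [CompatibleAction G B M] :
    B ⊗[fixedSubring G B] (invariantSubmodule G B M) →ₗ[fixedSubring G B] M :=
  TensorProduct.lift
    { toFun := fun b =>
        ((LinearMap.lsmul B M b).restrictScalars (fixedSubring G B)) ∘ₗ
          (invariantSubmodule G B M).subtype
      map_add' := fun b b' => by ext m; simp [add_smul]
      map_smul' := fun a b => by ext m; simp [Subring.smul_def, mul_smul] }

section Aux

variable {G : Type*} {B : Type u} {M : Type*} [Group G] [Fintype G] [CommRing B]
  [MulSemiringAction G B] [AddCommGroup M] [Module B M] [CompatibleAction G B M]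

lemma smul_invOf_card [Invertible ((Fintype.card G : B))] (g : G) :
    g • (⅟(Fintype.card G : B)) = ⅟(Fintype.card G : B) := by
  refine (invOf_eq_right_inv ?_).symm
  have h1 : g • ((Fintype.card G : B)) = (Fintype.card G : B) :=
    map_natCast (MulSemiringAction.toRingHom G B g) _
  calc (Fintype.card G : B) * g • ⅟(Fintype.card G : B)
      = g • ((Fintype.card G : B) * ⅟(Fintype.card G : B)) := by rw [smul_mul', h1]
    _ = 1 := by rw [mul_invOf_self, smul_one]

lemma reynolds_mem [Invertible ((Fintype.card G : B))] (x : M) :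
    (⅟(Fintype.card G : B)) • (∑ g : G, g • x) ∈ invariantSubmodule G B M := by
  intro h
  rw [CompatibleAction.smul_smul_comm h (⅟(Fintype.card G : B)) _, smul_invOf_card]
  congr 1
  rw [Finset.smul_sum]
  refine Fintype.sum_equiv (Equiv.mulLeft h) _ _ ?_
  intro g
  rw [Equiv.coe_mulLeft, mul_smul]

/-- Core vanishing lemma: any `φ`-semilinear functional on `M` that kills the invariants
and is insensitive to the stabilizer of `φ` must vanish. -/
lemma fiber_vanish [Invertible ((Fintype.card G : B))]
    {k : Type*} [Field k] (φ : B →+* k)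
    (f : M →+ k) (hsmul : ∀ (b : B) (m : M), f (b • m) = φ b * f m)
    (hinv : ∀ m ∈ invariantSubmodule G B M, f m = 0)
    (hstab : ∀ g : G, (∀ b, φ (g • b) = φ b) → ∀ m : M, f (g • m) = f m) :
    ∀ m : M, f m = 0 := by
  classical
  intro m
  set n := Fintype.card G with hn'
  have hφn : φ (⅟(n:B)) * φ ((n:B)) = 1 := by
    rw [← map_mul, invOf_mul_self, map_one]
  have hinvn : φ (⅟(n:B)) ≠ 0 := left_ne_zero_of_mul_eq_one hφn
  have hnk : ((n:k)) ≠ 0 := by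
    have := right_ne_zero_of_mul_eq_one hφn
    rwa [map_natCast] at this
  -- the characters
  set χ : G → (B →* k) := fun g =>
    { toFun := fun b => φ (g • b)
      map_one' := by show φ (g • 1) = 1; rw [smul_one, map_one]
      map_mul' := fun x y => by
        show φ (g • (x * y)) = φ (g • x) * φ (g • y)
        rw [smul_mul', map_mul] } with hχ
  have hχapp : ∀ g b, χ g b = φ (g • b) := fun g b => rfl
  -- key linear relation
  have key : ∀ b : B, ∑ g : G, f (g • m) * χ g b = 0 := by
    intro b
    have h0 : f ((⅟(n:B)) • (∑ g : G, g • (b • m))) = 0 :=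
      hinv _ (reynolds_mem (b • m))
    rw [hsmul] at h0
    have h1 : f (∑ g : G, g • (b • m)) = ∑ g : G, f (g • m) * χ g b := by
      rw [map_sum]
      refine Finset.sum_congr rfl ?_
      intro g _
      rw [CompatibleAction.smul_smul_comm g b m, hsmul, hχapp, mul_comm]
    rw [h1] at h0
    exact (mul_eq_zero.1 h0).resolve_left hinvn
  -- group by character
  set S : Finset (B →* k) := Finset.univ.image χ with hS
  set c : (B →* k) → k := fun ψ => ∑ g ∈ Finset.univ.filter (fun g => χ g = ψ), f (g • m)
    with hc
  have hsum : ∑ ψ ∈ S, c ψ • (ψ : B → k) = 0 := by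
    funext b
    rw [Finset.sum_apply]
    have : ∀ ψ ∈ S, (c ψ • (ψ : B → k)) b
        = ∑ g ∈ Finset.univ.filter (fun g => χ g = ψ), f (g • m) * χ g b := by
      intro ψ _
      rw [Pi.smul_apply, smul_eq_mul, hc, Finset.sum_mul]
      refine Finset.sum_congr rfl ?_
      intro g hg
      rw [(Finset.mem_filter.1 hg).2]
    rw [Finset.sum_congr rfl this,
      Finset.sum_fiberwise_of_maps_to (fun g _ => Finset.mem_image_of_mem χ (Finset.mem_univ g)),
      key]
    rfl
  have hczero : c (χ 1) = 0 := by
    refine linearIndependent_iff'.1 (linearIndependent_monoidHom B k) S c hsum (χ 1) ?_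
    exact Finset.mem_image_of_mem χ (Finset.mem_univ 1)
  -- the stabilizer subgroup
  set I : Subgroup G :=
    { carrier := {g | ∀ b, φ (g • b) = φ b}
      one_mem' := fun b => by rw [one_smul]
      mul_mem' := by
        intro x y hx hy b
        rw [mul_smul, hx, hy]
      inv_mem' := by
        intro x hx b
        conv_rhs => rw [← smul_inv_smul x b]
        rw [hx] } with hI
  have hmemI : ∀ g : G, χ g = χ 1 ↔ g ∈ I := by
    intro g
    constructor
    · intro h b
      have := DFunLike.congr_fun h b
      rwa [hχapp, hχapp, one_smul] at this
    · intro h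
      ext b
      rw [hχapp, hχapp, one_smul, h b]
  have hfilt : Finset.univ.filter (fun g => χ g = χ 1)
      = Finset.univ.filter (fun g => g ∈ I) := by
    refine Finset.filter_congr ?_
    intro g _
    simp [hmemI g]
  have hcval : c (χ 1) = ((Finset.univ.filter (fun g : G => g ∈ I)).card : k) * f m := by
    rw [hc]
    dsimp only
    rw [hfilt]
    trans ∑ _g ∈ Finset.filter (fun g => g ∈ I) Finset.univ, f m
    · exact Finset.sum_congr rfl (fun g hg => hstab g ((Finset.mem_filter.1 hg).2) m)
    · rw [Finset.sum_const, nsmul_eq_mul]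
  have hcard : ((Finset.univ.filter (fun g : G => g ∈ I)).card : k) ≠ 0 := by
    rw [← Fintype.card_subtype]
    obtain ⟨d, hd⟩ : Fintype.card ↥I ∣ n := by
      have := Subgroup.card_subgroup_dvd_card I
      rwa [Nat.card_eq_fintype_card, Nat.card_eq_fintype_card] at this
    intro h
    apply hnk
    rw [hd, Nat.cast_mul, h, zero_mul]
  rw [hczero] at hcval
  exact ((mul_eq_zero.1 hcval.symm).resolve_left hcard)

/-- Extract scalar-valued information from an equality of fiber elements. -/
lemma tensor_extract {k : Type*} [Field k] (φ : B →+* k) (f : M →+ k)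
    (hsmul : ∀ (b : B) (m : M), f (b • m) = φ b * f m) (x y : M)
    (h : haveI : Algebra B k := φ.toAlgebra
         x ⊗ₜ[B] (1 : k) = y ⊗ₜ[B] (1 : k)) :
    f x = f y := by
  letI : Algebra B k := φ.toAlgebra
  have smul_def : ∀ (b : B) (lam : k), b • lam = φ b * lam := fun b lam => by
    rw [Algebra.smul_def, RingHom.algebraMap_toAlgebra]
  let F : M →ₗ[B] k →ₗ[B] k :=
    LinearMap.mk₂ B (fun m lam => f m * lam)
      (fun m m' lam => by
        show f (m + m') * lam = f m * lam + f m' * lam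
        rw [map_add, add_mul])
      (fun b m lam => by
        show f (b • m) * lam = b • (f m * lam)
        rw [hsmul, smul_def, mul_assoc])
      (fun m lam lam' => by
        show f m * (lam + lam') = f m * lam + f m * lam'
        rw [mul_add])
      (fun b m lam => by
        show f m * (b • lam) = b • (f m * lam)
        rw [smul_def, smul_def]; ring)
  have h2 := congrArg (TensorProduct.lift F) h
  simp only [TensorProduct.lift.tmul, LinearMap.mk₂_apply, mul_one, F] at h2
  exact h2

/-- The invariants span `M` over `B`. -/
lemma span_invariants_eq_top [Invertible ((Fintype.card G : B))] [Module.Finite B M]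
    (htriv : ∀ (k : Type u) [Field k], ∀ (φ : B →+* k) (g : G),
      (∀ b : B, φ (g • b) = φ b) →
      ∀ m : M,
        haveI : Algebra B k := φ.toAlgebra
        (g • m) ⊗ₜ[B] (1 : k) = m ⊗ₜ[B] (1 : k)) :
    Submodule.span B ((invariantSubmodule G B M : Set M)) = ⊤ := by
  classical
  by_contra hne
  have hco : IsCoatomic (Submodule B M) :=
    CompleteLattice.coatomic_of_top_compact
      ((Submodule.fg_iff_compact _).1 (Module.finite_def.1 ‹Module.Finite B M›))
  obtain ⟨W, hW, hle⟩ := (hco.eq_top_or_exists_le_coatom _).resolve_left hne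
  obtain ⟨m₀, -, hm₀⟩ := SetLike.exists_of_lt hW.1.lt_top
  have hsup : ∀ x : M, x ∉ W → W ⊔ Submodule.span B {x} = ⊤ := by
    intro x hx
    refine hW.2 _ (lt_of_le_of_ne le_sup_left ?_)
    intro hEq
    apply hx
    have hx' : x ∈ W ⊔ Submodule.span B {x} :=
      (le_sup_right : Submodule.span B {x} ≤ _) (Submodule.mem_span_singleton_self x)
    rwa [← hEq] at hx'
  set 𝔪 : Ideal B := W.comap (LinearMap.toSpanSingleton B M m₀) with h𝔪
  have hmem𝔪 : ∀ b : B, b ∈ 𝔪 ↔ b • m₀ ∈ W := fun b => Iff.rfl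
  have hmax : 𝔪.IsMaximal := by
    rw [Ideal.isMaximal_iff]
    constructor
    · intro h1
      exact hm₀ (by simpa using (hmem𝔪 1).1 h1)
    · intro J x hIJ hx hxJ
      have hxm : x • m₀ ∉ W := fun h => hx ((hmem𝔪 x).2 h)
      have hmem : m₀ ∈ W ⊔ Submodule.span B {x • m₀} := (hsup _ hxm) ▸ Submodule.mem_top
      obtain ⟨w, hw, y, hy, hwy⟩ := Submodule.mem_sup.1 hmem
      obtain ⟨c, rfl⟩ := Submodule.mem_span_singleton.1 hy
      have h1 : (1 - c * x) • m₀ ∈ W := by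
        have hw' : w = m₀ - c • x • m₀ := eq_sub_of_add_eq hwy
        have heq : (1 - c * x) • m₀ = w := by
          rw [hw', sub_smul, one_smul, mul_smul]
        rw [heq]; exact hw
      have h2 : 1 - c * x ∈ J := hIJ ((hmem𝔪 _).2 h1)
      have h3 : (1 : B) = (1 - c * x) + c * x := by ring
      rw [h3]
      exact J.add_mem h2 (J.mul_mem_left c hxJ)
  haveI := hmax
  letI : Field (B ⧸ 𝔪) := Ideal.Quotient.field 𝔪
  set φ : B →+* (B ⧸ 𝔪) := Ideal.Quotient.mk 𝔪 with hφ
  set ℓ : B →ₗ[B] (M ⧸ W) := W.mkQ.comp (LinearMap.toSpanSingleton B M m₀) with hℓ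
  have hker : LinearMap.ker ℓ = 𝔪 := by
    ext b
    show W.mkQ (b • m₀) = 0 ↔ b ∈ 𝔪
    rw [Submodule.mkQ_apply, Submodule.Quotient.mk_eq_zero]
    exact (hmem𝔪 b).symm
  have hsurj : Function.Surjective ℓ := by
    intro ybar
    obtain ⟨y, rfl⟩ := W.mkQ_surjective ybar
    have hmem : y ∈ W ⊔ Submodule.span B {m₀} := (hsup m₀ hm₀) ▸ Submodule.mem_top
    obtain ⟨w, hw, z, hz, hwz⟩ := Submodule.mem_sup.1 hmem
    obtain ⟨c, rfl⟩ := Submodule.mem_span_singleton.1 hz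
    refine ⟨c, ?_⟩
    show W.mkQ (c • m₀) = W.mkQ y
    rw [Submodule.mkQ_apply, Submodule.mkQ_apply, Submodule.Quotient.eq]
    have : c • m₀ - y = -w := by rw [← hwz]; abel
    rw [this]
    exact W.neg_mem hw
  let e : (B ⧸ 𝔪) ≃ₗ[B] (M ⧸ W) :=
    (Submodule.quotEquivOfEq _ _ hker.symm) ≪≫ₗ (ℓ.quotKerEquivOfSurjective hsurj)
  let f : M →ₗ[B] (B ⧸ 𝔪) := (e.symm.toLinearMap).comp W.mkQ
  have hbsmul : ∀ (b : B) (x : B ⧸ 𝔪), b • x = φ b * x := by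
    intro b x
    obtain ⟨y, rfl⟩ := Submodule.Quotient.mk_surjective (𝔪 : Submodule B B) x
    rw [← Submodule.Quotient.mk_smul, smul_eq_mul]
    show φ (b * y) = φ b * φ y
    rw [map_mul]
  have hfsmul : ∀ (b : B) (m : M), f.toAddMonoidHom (b • m) = φ b * f.toAddMonoidHom m := by
    intro b m
    show f (b • m) = φ b * f m
    rw [map_smul, hbsmul]
  have hfinv : ∀ m ∈ invariantSubmodule G B M, f.toAddMonoidHom m = 0 := by
    intro m hm
    have hmW : m ∈ W := hle (Submodule.subset_span hm)
    show e.symm (W.mkQ m) = 0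
    rw [Submodule.mkQ_apply, (Submodule.Quotient.mk_eq_zero W).2 hmW, map_zero]
  have hstab : ∀ g : G, (∀ b, φ (g • b) = φ b) → ∀ m : M,
      f.toAddMonoidHom (g • m) = f.toAddMonoidHom m := by
    intro g hg m
    exact tensor_extract φ f.toAddMonoidHom hfsmul _ _ (htriv (B ⧸ 𝔪) φ g hg m)
  have hvan := fiber_vanish φ f.toAddMonoidHom hfsmul hfinv hstab m₀
  have h0 : W.mkQ m₀ ≠ 0 := by
    rw [Submodule.mkQ_apply]
    exact fun h => hm₀ ((Submodule.Quotient.mk_eq_zero W).1 h)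
  apply h0
  have : e.symm (W.mkQ m₀) = 0 := hvan
  exact (LinearEquiv.map_eq_zero_iff e.symm).1 this

end Aux

/-- For a finitely generated projective `B`-module `M` with compatible `G`-action whose
fibers at field-valued points are trivial representations of the stabilizers, the counit
`ε : B ⊗_A M^G → M` is bijective and `M^G` is a finitely generated projective module over
`A = B^G`. -/
theorem projective_descent_of_trivial_fiber_actions
    {G : Type*} {B : Type u} {M : Type*} [Group G] [Fintype G] [CommRing B]
    [MulSemiringAction G B] [AddCommGroup M] [Module B M] [CompatibleAction G B M]
    (hcard : Invertible (Fintype.card G : B))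
    (hfg : Module.Finite B M) (hproj : Module.Projective B M)
    (htriv : ∀ (k : Type u) [Field k], ∀ (φ : B →+* k) (g : G),
      (∀ b : B, φ (g • b) = φ b) →
      ∀ m : M,
        haveI : Algebra B k := φ.toAlgebra
        (g • m) ⊗ₜ[B] (1 : k) = m ⊗ₜ[B] (1 : k)) :
    Function.Bijective (counitMap G B M) ∧
    Module.Finite (fixedSubring G B) (invariantSubmodule G B M) ∧
    Module.Projective (fixedSubring G B) (invariantSubmodule G B M) := by
  classical
  letI := hcard
  have hspan : Submodule.span B ((invariantSubmodule G B M : Set M)) = ⊤ :=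
    span_invariants_eq_top htriv
  -- a finite generating family of invariants
  obtain ⟨t, ht⟩ : ∃ t : Finset ((invariantSubmodule G B M : Set M)),
      (⊤ : Submodule B M) ≤ ⨆ i ∈ t, Submodule.span B {(i : M)} := by
    have hcpt : IsCompactElement (⊤ : Submodule B M) :=
      (Submodule.fg_iff_compact _).1 (Module.finite_def.1 hfg)
    refine CompleteLattice.IsCompactElement.exists_finset_of_le_iSup (Submodule B M) hcpt
      (fun i : (invariantSubmodule G B M : Set M) => Submodule.span B {(i : M)}) ?_
    rw [← Submodule.span_range_eq_iSup, Subtype.range_coe, hspan]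
  set v : ↥t → M := fun i => ((i : (invariantSubmodule G B M : Set M)) : M) with hvdef
  have hv : ∀ (i : ↥t) (g : G), g • v i = v i := fun i g => i.1.2 g
  -- the equivariant surjection θ from a free module
  let θ : (↥t → B) →ₗ[B] M :=
    { toFun := fun w => ∑ i, w i • v i
      map_add' := fun w w' => by simp [add_smul, Finset.sum_add_distrib]
      map_smul' := fun b w => by simp [mul_smul, Finset.smul_sum] }
  have hθ_apply : ∀ w, θ w = ∑ i, w i • v i := fun w => rfl
  have hθsurj : Function.Surjective θ := by
    intro m
    have hm : m ∈ Submodule.span B (Set.range v) := by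
      refine ht.trans ?_ Submodule.mem_top
      refine iSup_le fun i => iSup_le fun hi => Submodule.span_mono ?_
      rintro x hx
      rw [Set.mem_singleton_iff] at hx
      exact ⟨⟨i, hi⟩, hx.symm⟩
    obtain ⟨w, hw⟩ := (Submodule.mem_span_range_iff_exists_fun B).1 hm
    exact ⟨w, hw⟩
  have hGF : ∀ (g : G) (b : B) (w : ↥t → B), g • (b • w) = (g • b) • (g • w) := by
    intro g b w
    funext i
    simp only [Pi.smul_apply, smul_eq_mul, smul_mul']
  have hθg : ∀ (g : G) (w : ↥t → B), θ (g • w) = g • θ w := by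
    intro g w
    rw [hθ_apply, hθ_apply, Finset.smul_sum]
    refine Finset.sum_congr rfl fun i _ => ?_
    rw [CompatibleAction.smul_smul_comm g (w i) (v i), hv i g]
    rfl
  obtain ⟨σ₀, hσ₀⟩ := Module.projective_lifting_property θ LinearMap.id hθsurj
  have hσ₀' : ∀ m, θ (σ₀ m) = m := fun m => congrArg (fun f => f m) hσ₀
  -- averaged equivariant splitting σ
  let σ : M →ₗ[B] (↥t → B) :=
    { toFun := fun m => (⅟(Fintype.card G : B)) • ∑ g : G, g • (σ₀ (g⁻¹ • m))
      map_add' := fun x y => by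
        simp only [smul_add, map_add, Finset.sum_add_distrib]
      map_smul' := fun b m => by
        show (⅟(Fintype.card G : B)) • ∑ g : G, g • (σ₀ (g⁻¹ • (b • m)))
            = b • ((⅟(Fintype.card G : B)) • ∑ g : G, g • (σ₀ (g⁻¹ • m)))
        have step : ∀ g : G, g • (σ₀ (g⁻¹ • (b • m))) = b • (g • (σ₀ (g⁻¹ • m))) := by
          intro g
          rw [CompatibleAction.smul_smul_comm g⁻¹ b m, map_smul, hGF, smul_inv_smul]
        rw [Finset.sum_congr rfl (fun g _ => step g), ← Finset.smul_sum, smul_smul, smul_smul,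
          mul_comm] }
  have hσ_apply : ∀ m, σ m = (⅟(Fintype.card G : B)) • ∑ g : G, g • (σ₀ (g⁻¹ • m)) :=
    fun m => rfl
  have hσθ : ∀ m, θ (σ m) = m := by
    intro m
    rw [hσ_apply, map_smul, map_sum]
    have step : ∀ g : G, θ (g • σ₀ (g⁻¹ • m)) = m := fun g => by
      rw [hθg, hσ₀', smul_inv_smul]
    rw [Finset.sum_congr rfl (fun g _ => step g), Finset.sum_const, Finset.card_univ,
      ← Nat.cast_smul_eq_nsmul B, smul_smul, invOf_mul_self, one_smul]
  have hσg : ∀ (h : G) (m : M), σ (h • m) = h • σ m := by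
    intro h m
    rw [hσ_apply, hσ_apply, hGF h (⅟(Fintype.card G : B)) _, smul_invOf_card]
    congr 1
    rw [Finset.smul_sum]
    refine Fintype.sum_equiv (Equiv.mulLeft h).symm _ _ ?_
    intro x
    show x • σ₀ (x⁻¹ • (h • m)) = h • ((h⁻¹ * x) • σ₀ ((h⁻¹ * x)⁻¹ • m))
    rw [mul_inv_rev, inv_inv, ← mul_smul h (h⁻¹ * x), mul_inv_cancel_left, mul_smul x⁻¹ h m]
  have hσinv : ∀ (x : M), (∀ g : G, g • x = x) → ∀ i, σ x i ∈ fixedSubring G B := by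
    intro x hx i g
    have h1 : g • σ x = σ x := by rw [← hσg, hx g]
    have h2 : (g • σ x) i = σ x i := by rw [h1]
    simpa only [Pi.smul_apply] using h2
  -- the retraction pair over the invariant subring
  let vv : ↥t → ↥(invariantSubmodule G B M) := fun i => ⟨v i, hv i⟩
  let Θ : (↥t → ↥(fixedSubring G B)) →ₗ[fixedSubring G B] ↥(invariantSubmodule G B M) :=
    { toFun := fun a => ⟨∑ i, (a i : B) • v i, by
        intro g
        rw [Finset.smul_sum]
        refine Finset.sum_congr rfl fun i _ => ?_
        rw [CompatibleAction.smul_smul_comm, (a i).2 g, hv i g]⟩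
      map_add' := fun a a' => by
        apply Subtype.ext
        show ∑ i, (((a i + a' i : ↥(fixedSubring G B))) : B) • v i
            = (∑ i, (a i : B) • v i) + ∑ i, (a' i : B) • v i
        simp [add_smul, Finset.sum_add_distrib]
      map_smul' := fun c a => by
        apply Subtype.ext
        show ∑ i, ((c • a i : ↥(fixedSubring G B)) : B) • v i
            = (c : B) • ∑ i, (a i : B) • v i
        rw [Finset.smul_sum]
        refine Finset.sum_congr rfl fun i _ => ?_
        rw [smul_eq_mul, Subring.coe_mul, mul_smul] }
  have hΘ_apply : ∀ a, (Θ a : M) = ∑ i, (a i : B) • v i := fun a => rfl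
  let Sg : ↥(invariantSubmodule G B M) →ₗ[fixedSubring G B] (↥t → ↥(fixedSubring G B)) :=
    { toFun := fun x => fun i => ⟨σ (x : M) i, hσinv (x : M) x.2 i⟩
      map_add' := fun x y => by
        funext i
        apply Subtype.ext
        show σ ((x : M) + (y : M)) i = σ (x : M) i + σ (y : M) i
        rw [map_add]
        rfl
      map_smul' := fun c x => by
        funext i
        apply Subtype.ext
        show σ ((c : B) • (x : M)) i = (c • (⟨σ (x : M) i, _⟩ : ↥(fixedSubring G B)) : B)
        rw [map_smul]
        rfl }
  have hThSg : ∀ x, Θ (Sg x) = x := by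
    intro x
    apply Subtype.ext
    show ∑ i, σ (x : M) i • v i = (x : M)
    exact hσθ (x : M)
  have hfin : Module.Finite (fixedSubring G B) ↥(invariantSubmodule G B M) :=
    Module.Finite.of_surjective Θ (fun x => ⟨Sg x, hThSg x⟩)
  have hproj' : Module.Projective (fixedSubring G B) ↥(invariantSubmodule G B M) :=
    Module.Projective.of_split Sg Θ (LinearMap.ext hThSg)
  -- the counit
  have hε : ∀ (b : B) (x : ↥(invariantSubmodule G B M)),
      counitMap G B M (b ⊗ₜ[fixedSubring G B] x) = b • (x : M) := by
    intro b x
    simp [counitMap]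
  refine ⟨⟨?_, ?_⟩, hfin, hproj'⟩
  · -- injectivity
    let Φ : (↥t → B) →+ (B ⊗[fixedSubring G B] ↥(invariantSubmodule G B M)) :=
      { toFun := fun w => ∑ i, w i ⊗ₜ[fixedSubring G B] vv i
        map_zero' := by simp
        map_add' := fun w w' => by simp [TensorProduct.add_tmul, Finset.sum_add_distrib] }
    have hΦ_apply : ∀ w, Φ w = ∑ i, w i ⊗ₜ[fixedSubring G B] vv i := fun w => rfl
    have hkey : ∀ z : B ⊗[fixedSubring G B] ↥(invariantSubmodule G B M),
        Φ (σ (counitMap G B M z)) = z := by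
      intro z
      induction z using TensorProduct.induction_on with
      | zero => rw [map_zero, map_zero, map_zero]
      | tmul b x =>
        rw [hε, map_smul, hΦ_apply]
        have step : ∀ i : ↥t, (b • σ (x : M)) i ⊗ₜ[fixedSubring G B] vv i
            = b ⊗ₜ[fixedSubring G B] ((⟨σ (x : M) i, hσinv _ x.2 i⟩ : ↥(fixedSubring G B)) • vv i) := by
          intro i
          have h1 : (b • σ (x : M)) i
              = (⟨σ (x : M) i, hσinv _ x.2 i⟩ : ↥(fixedSubring G B)) • b := by
            show b * σ (x : M) i = _
            rw [Subring.smul_def, mul_comm]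
            rfl
          rw [h1, TensorProduct.smul_tmul]
        rw [Finset.sum_congr rfl (fun i _ => step i), ← TensorProduct.tmul_sum]
        congr 1
        apply Subtype.ext
        show ((∑ i, (⟨σ (x : M) i, hσinv _ x.2 i⟩ : ↥(fixedSubring G B)) • vv i :
            ↥(invariantSubmodule G B M)) : M) = (x : M)
        simp only [AddSubmonoidClass.coe_finset_sum, SetLike.val_smul, Subring.smul_def]
        exact hσθ (x : M)
      | add z z' h h' => rw [map_add, map_add, map_add, h, h']
    intro z z' hzz
    rw [← hkey z, ← hkey z', hzz]
  · -- surjectivity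
    intro m
    refine ⟨∑ i, (σ m i) ⊗ₜ[fixedSubring G B] vv i, ?_⟩
    rw [map_sum]
    rw [Finset.sum_congr rfl (fun i _ => hε (σ m i) (vv i))]
    exact hσθ m
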